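/- Let (S,*) be a commutative adequate partial semigroup, let r be an idempotent in J(S), and let (C_n)_{n=1}^∞ be a sequence of members of r. Then there exist functions γ : P_f(ℱ) → S and H : P_f(ℱ) → P_f(ℕ) such that: (1) if F, G ∈ P_f(ℱ) with G ⊊ F, then max H(G) < min H(F); and (2) whenever n ∈ ℕ, G_1 ⊊ G_2 ⊊ ... ⊊ G_n are members of P_f(ℱ) with |G_1| = m, and f_i ∈ G_i for each i, then ∏_{i=1}^{n} (γ(G_i)*∏_{t∈H(G_i)} f_i(t)) ∈ C_m. -/

import Mathlib

/-- A partial semigroup: `mul` is partially defined (`none` = undefined), and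
associativity holds in the strong sense: either side is defined iff the other is,
and then they agree. -/
structure PartialSemigroup (S : Type*) where
  mul : S → S → Option S
  assoc : ∀ a b c : S,
    (mul a b).bind (fun x => mul x c) = (mul b c).bind (fun y => mul a y)

namespace PartialSemigroup

variable {S : Type*} (P : PartialSemigroup S)

/-- φ(a) = {t : a*t is defined}. -/
def phi (a : S) : Set S := {t | (P.mul a t).isSome}

/-- σ(H) = ⋂_{s ∈ H} φ(s). -/
def sigma (H : Set S) : Set S := ⋂ s ∈ H, P.phi s

/-- a⁻¹A = {t ∈ φ(a) : a*t ∈ A}. -/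
def invImg (a : S) (A : Set S) : Set S :=
  {t | ∃ v, P.mul a t = some v ∧ v ∈ A}

/-- An adequate partial semigroup: σ(H) ≠ ∅ for every finite nonempty H. -/
def Adequate : Prop :=
  ∀ H : Finset S, H.Nonempty → (P.sigma ↑H).Nonempty

/-- δS: ultrafilters containing every φ(x). -/
def mem_delta (q : Ultrafilter S) : Prop := ∀ x : S, P.phi x ∈ q

/-- Product of a nonempty list, associated to the left; `none` if empty or undefined. -/
def listProd : List S → Option S
  | [] => none
  | a :: l => l.foldl (fun acc b => acc.bind (fun x => P.mul x b)) (some a)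

/-- ∏_{t ∈ H} f(t) in increasing order of indices. -/
def finProd (f : ℕ → S) (H : Finset ℕ) : Option S :=
  P.listProd ((H.sort (· ≤ ·)).map f)

/-- Product of a list of partially defined elements. -/
def optProd : List (Option S) → Option S
  | [] => none
  | o :: l => l.foldl (fun acc b => acc.bind (fun x => b.bind (fun y => P.mul x y))) o

/-- An adequate sequence. -/
def AdequateSeq (f : ℕ → S) : Prop :=
  (∀ H : Finset ℕ, H.Nonempty → (P.finProd f H).isSome) ∧
  (∀ F : Finset S, F.Nonempty → ∃ m : ℕ,
    ∀ H : Finset ℕ, H.Nonempty → (∀ n ∈ H, m ≤ n) →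
      ∀ v, P.finProd f H = some v → v ∈ P.sigma ↑F)

/-- The interleaved product (∏_{i=1}^m a(i)*f(t(i)))*a(m+1). -/
def jProd {m : ℕ} (a : Fin (m + 1) → S) (t : Fin m → ℕ) (f : ℕ → S) : Option S :=
  P.listProd
    ((((List.finRange m).map (fun i => [a i.castSucc, f (t i)])).flatten) ++ [a (Fin.last m)])

/-- J-sets. -/
def IsJSet (A : Set S) : Prop :=
  ∀ F : Finset (ℕ → S), F.Nonempty → (∀ f ∈ F, P.AdequateSeq f) →
    ∀ L : Finset S, L.Nonempty →
      ∃ m : ℕ, 0 < m ∧ ∃ a : Fin (m + 1) → S, ∃ t : Fin m → ℕ, StrictMono t ∧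
        ∀ f ∈ F, ∃ v, P.jProd a t f = some v ∧ v ∈ A ∩ P.sigma ↑L

end PartialSemigroup

namespace PartialSemigroup
variable {S : Type*} (P : PartialSemigroup S)

/-- A syndetic subset of a partial semigroup. -/
def Syndetic (A : Set S) : Prop :=
  ∃ H : Finset S, H.Nonempty ∧ P.sigma ↑H ⊆ ⋃ t ∈ H, P.invImg t A

end PartialSemigroup

namespace PartialSemigroup
variable {S : Type*} (P : PartialSemigroup S)

/-- `I` is a (two-sided) ideal of `δS` (with respect to the operation `star`). -/
def IsIdeal (star : {q : Ultrafilter S // P.mem_delta q} → {q : Ultrafilter S // P.mem_delta q} →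
      {q : Ultrafilter S // P.mem_delta q})
    (I : Set {q : Ultrafilter S // P.mem_delta q}) : Prop :=
  I.Nonempty ∧ ∀ p ∈ I, ∀ q, star p q ∈ I ∧ star q p ∈ I

/-- `K` is the smallest (two-sided) ideal of `δS`. -/
def IsSmallestIdeal (star : {q : Ultrafilter S // P.mem_delta q} →
      {q : Ultrafilter S // P.mem_delta q} → {q : Ultrafilter S // P.mem_delta q})
    (K : Set {q : Ultrafilter S // P.mem_delta q}) : Prop :=
  P.IsIdeal star K ∧ ∀ I, P.IsIdeal star I → K ⊆ I

end PartialSemigroup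

namespace CSTAux
open PartialSemigroup

variable {S : Type*} (P : PartialSemigroup S)

/-- Lifted partial multiplication on `Option S`. -/
def op (x y : Option S) : Option S := x.bind fun a => y.bind fun b => P.mul a b

@[simp] lemma op_none_left (y : Option S) : op P none y = none := rfl
@[simp] lemma op_none_right (x : Option S) : op P x none = none := by cases x <;> rfl
@[simp] lemma op_some_some (a b : S) : op P (some a) (some b) = P.mul a b := rfl

lemma op_assoc (x y z : Option S) : op P (op P x y) z = op P x (op P y z) := by
  cases x with
  | none => rfl
  | some a =>
    cases y with
    | none => simp
    | some b =>
      cases z with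
      | none => simp
      | some c =>
        show op P (P.mul a b) (some c) = op P (some a) (P.mul b c)
        have h := P.assoc a b c
        cases hab : P.mul a b with
        | none =>
          cases hbc : P.mul b c with
          | none => rfl
          | some u =>
            rw [hab, hbc] at h
            simp only [Option.bind_none, Option.bind_some] at h
            show (none : Option S) = P.mul a u
            exact h
        | some u =>
          cases hbc : P.mul b c with
          | none =>
            rw [hab, hbc] at h
            simp only [Option.bind_none, Option.bind_some] at h
            show P.mul u c = none
            exact h
          | some w =>
            rw [hab, hbc] at h
            simp only [Option.bind_some] at h
            show P.mul u c = P.mul a w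
            exact h

lemma op_comm (hcomm : ∀ a b : S, P.mul a b = P.mul b a) (x y : Option S) :
    op P x y = op P y x := by
  cases x <;> cases y <;> simp [hcomm _ _]

/-- The (total) commutative monoid obtained from `P` by adjoining a zero (`none : Option S`,
the undefined value) and a unit. -/
def M (P : PartialSemigroup S) (_hcomm : ∀ a b : S, P.mul a b = P.mul b a) : Type _ :=
  Option (Option S)

variable (hcomm : ∀ a b : S, P.mul a b = P.mul b a)

instance : CommMonoid (M P hcomm) where
  mul x y := match x, y with
    | none, y => y
    | x, none => x
    | some a, some b => some (op P a b)
  one := (none : Option (Option S))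
  mul_assoc x y z := by
    cases x <;> cases y <;> cases z <;>
      first
      | rfl
      | exact congrArg some (op_assoc P _ _ _)
  one_mul x := by cases x <;> rfl
  mul_one x := by cases x <;> rfl
  mul_comm x y := by
    cases x <;> cases y <;>
      first
      | rfl
      | exact congrArg some (op_comm P hcomm _ _)

/-- Embedding of `Option S` into the monoid. -/
def jm (x : Option S) : M P hcomm := some x

/-- Embedding of `S` into the monoid. -/
def ι (s : S) : M P hcomm := jm P hcomm (some s)

lemma jm_injective : Function.Injective (jm P hcomm) := fun a b h =>
  Option.some_injective _ (h : (some a : Option (Option S)) = some b)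

lemma ι_injective : Function.Injective (ι P hcomm) := fun _ _ h =>
  Option.some_injective _ (jm_injective P hcomm h)

@[simp] lemma jm_mul (x y : Option S) :
    jm P hcomm x * jm P hcomm y = jm P hcomm (op P x y) := rfl

lemma jm_ne_one (x : Option S) : jm P hcomm x ≠ 1 := by
  intro h
  exact Option.some_ne_none _ (h : (some x : Option (Option S)) = none)

lemma M.exhaust (x : M P hcomm) : x = 1 ∨ ∃ o : Option S, x = jm P hcomm o :=
  match x with
  | (none : Option (Option S)) => Or.inl rfl
  | (some o : Option (Option S)) => Or.inr ⟨o, rfl⟩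

end CSTAux
namespace CSTAux
open PartialSemigroup

variable {S : Type*} (P : PartialSemigroup S) (hcomm : ∀ a b : S, P.mul a b = P.mul b a)

lemma foldl_op_eq (l : List (Option S)) (x : Option S) :
    jm P hcomm (l.foldl (op P) x) = jm P hcomm x * (l.map (jm P hcomm)).prod := by
  induction l generalizing x with
  | nil => simp
  | cons o l ih =>
    rw [List.foldl_cons, List.map_cons, List.prod_cons, ih, ← mul_assoc, jm_mul]

lemma listProd_eq (l : List S) (h : l ≠ []) :
    jm P hcomm (P.listProd l) = (l.map (ι P hcomm)).prod := by
  match l with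
  | [] => exact absurd rfl h
  | a :: l =>
    show jm P hcomm (l.foldl (fun acc b => acc.bind (fun x => P.mul x b)) (some a)) = _
    have h1 : (l.foldl (fun acc b => acc.bind (fun x => P.mul x b)) (some a))
        = (l.map some).foldl (op P) (some a) := by
      rw [List.foldl_map]
      rfl
    rw [h1, foldl_op_eq, List.map_cons, List.prod_cons, List.map_map]
    rfl

lemma optProd_eq (l : List (Option S)) (h : l ≠ []) :
    jm P hcomm (P.optProd l) = (l.map (jm P hcomm)).prod := by
  match l with
  | [] => exact absurd rfl h
  | o :: l =>
    show jm P hcomm (l.foldl (fun acc b => acc.bind fun x => b.bind fun y => P.mul x y) o) = _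
    have h1 : (fun (acc b : Option S) => acc.bind fun x => b.bind fun y => P.mul x y) = op P := rfl
    rw [h1, foldl_op_eq, List.map_cons, List.prod_cons]

lemma finProd_eq (f : ℕ → S) (H : Finset ℕ) (h : H.Nonempty) :
    jm P hcomm (P.finProd f H) = ∏ t ∈ H, ι P hcomm (f t) := by
  have hs : (H.sort (· ≤ ·)).map f ≠ [] := by
    apply List.ne_nil_of_length_pos
    rw [List.length_map, Finset.length_sort]
    exact h.card_pos
  rw [finProd, listProd_eq P hcomm _ hs, List.map_map]
  rw [Finset.prod_eq_multiset_prod, ← Finset.sort_eq H (· ≤ ·), Multiset.map_coe,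
    Multiset.prod_coe]
  rfl

lemma jProd_eq {m : ℕ} (a : Fin (m + 1) → S) (t : Fin m → ℕ) (f : ℕ → S) :
    jm P hcomm (P.jProd a t f)
      = (∏ i : Fin (m + 1), ι P hcomm (a i)) * ∏ i : Fin m, ι P hcomm (f (t i)) := by
  rw [jProd, listProd_eq P hcomm _ (by simp)]
  simp only [List.map_append, List.prod_append, List.map_flatten, List.map_map,
    List.prod_flatten, List.map_cons, List.map_nil, List.prod_cons, List.prod_nil, mul_one]
  have h1 : (List.prod ∘ List.map (ι P hcomm) ∘ fun i : Fin m => [a i.castSucc, f (t i)])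
      = fun i : Fin m => ι P hcomm (a i.castSucc) * ι P hcomm (f (t i)) := by
    funext i
    simp
  rw [h1, ← Fin.prod_univ_def, Finset.prod_mul_distrib,
    Fin.prod_univ_castSucc (f := fun i => ι P hcomm (a i))]
  rw [mul_right_comm]

lemma mul_ne_one_right (x y : M P hcomm) (hy : y ≠ 1) : x * y ≠ 1 := by
  rcases M.exhaust P hcomm x with rfl | ⟨o, rfl⟩
  · simpa using hy
  · rcases M.exhaust P hcomm y with rfl | ⟨o', rfl⟩
    · exact absurd rfl hy
    · rw [jm_mul]; exact jm_ne_one P hcomm _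

lemma exists_iota_of_mul_eq_iota (x y : M P hcomm) (v : S) (hx : x ≠ 1)
    (h : x * y = ι P hcomm v) : ∃ g : S, x = ι P hcomm g := by
  rcases M.exhaust P hcomm x with rfl | ⟨o, rfl⟩
  · exact absurd rfl hx
  rcases M.exhaust P hcomm y with rfl | ⟨o', rfl⟩
  · rw [mul_one] at h; exact ⟨v, h⟩
  rw [jm_mul] at h
  have h2 : op P o o' = some v := jm_injective P hcomm h
  cases o with
  | none => simp at h2
  | some g => exact ⟨g, rfl⟩

end CSTAux
namespace CSTAux
open PartialSemigroup

variable {S : Type*} (P : PartialSemigroup S) (hcomm : ∀ a b : S, P.mul a b = P.mul b a)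

lemma invImg_comp {a t v : S} (h : P.mul a t = some v) (A : Set S) :
    P.invImg v A = P.invImg t (P.invImg a A) := by
  ext s
  have hassoc := P.assoc a t s
  rw [h, Option.bind_some] at hassoc
  constructor
  · rintro ⟨w, hw, hwA⟩
    rw [hw] at hassoc
    rcases Option.bind_eq_some_iff.mp hassoc.symm with ⟨u, hu, hu2⟩
    exact ⟨u, hu, w, hu2, hwA⟩
  · rintro ⟨u, hu, w, hw, hwA⟩
    refine ⟨w, ?_, hwA⟩
    rw [hassoc, hu, Option.bind_some, hw]

variable (r : Ultrafilter S)

/-- The "star" of a set with respect to the idempotent ultrafilter `r`. -/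
def star (A : Set S) : Set S := {a | a ∈ A ∧ P.invImg a A ∈ r}

lemma star_subset (A : Set S) : star P r A ⊆ A := fun _ h => h.1

lemma star_mem (hidem : ∀ A : Set S, A ∈ r ↔ {a : S | P.invImg a A ∈ r} ∈ r)
    {A : Set S} (hA : A ∈ r) : star P r A ∈ r := by
  have h2 : {a : S | P.invImg a A ∈ r} ∈ r := (hidem A).mp hA
  exact Filter.inter_mem hA h2

lemma star_invImg (hidem : ∀ A : Set S, A ∈ r ↔ {a : S | P.invImg a A ∈ r} ∈ r)
    {A : Set S} (hA : A ∈ r) {a : S} (ha : a ∈ star P r A) :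
    P.invImg a (star P r A) ∈ r := by
  have hB : P.invImg a A ∈ r := ha.2
  have hT : {t : S | P.invImg t (P.invImg a A) ∈ r} ∈ r := (hidem _).mp hB
  have hsub : P.invImg a A ∩ {t : S | P.invImg t (P.invImg a A) ∈ r} ⊆
      P.invImg a (star P r A) := by
    rintro t ⟨⟨v, hv, hvA⟩, ht⟩
    refine ⟨v, hv, hvA, ?_⟩
    rw [invImg_comp P hv A]
    exact ht
  exact Filter.mem_of_superset (Filter.inter_mem hB hT) hsub

/-- Shifting by `N` preserves finite products. -/
lemma finProd_shift (hcomm : ∀ a b : S, P.mul a b = P.mul b a) (f : ℕ → S) (N : ℕ) (H : Finset ℕ) :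
    P.finProd (fun n => f (n + N)) H = P.finProd f (H.image (· + N)) := by
  rcases H.eq_empty_or_nonempty with rfl | h
  · simp [finProd, listProd]
  apply jm_injective P hcomm
  rw [finProd_eq P hcomm _ _ h, finProd_eq P hcomm _ _ (h.image _)]
  rw [Finset.prod_image (fun a _ b _ hab => by omega)]

lemma adequateSeq_shift (hcomm : ∀ a b : S, P.mul a b = P.mul b a) {f : ℕ → S} (hf : P.AdequateSeq f) (N : ℕ) :
    P.AdequateSeq (fun n => f (n + N)) := by
  constructor
  · intro H hH
    rw [finProd_shift P hcomm f N H]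
    exact hf.1 _ (hH.image _)
  · intro F hF
    obtain ⟨m, hm⟩ := hf.2 F hF
    refine ⟨m, fun H hH hHm v hv => ?_⟩
    rw [finProd_shift P hcomm f N H] at hv
    refine hm _ (hH.image _) ?_ v hv
    intro n hn
    rcases Finset.mem_image.mp hn with ⟨k, hk, rfl⟩
    exact le_trans (hHm k hk) (Nat.le_add_right _ _)

/-- Applying the J-set property, with all the "partial product" bookkeeping
translated into the monoid `M`, and with indices at least `N`. -/
lemma jset_apply (hS : Nonempty S) {E : Set S} (hE : P.IsJSet E)
    (G : Finset (ℕ → S)) (hG : G.Nonempty) (hGa : ∀ f ∈ G, P.AdequateSeq f) (N : ℕ) :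
    ∃ (g : S) (HF : Finset ℕ), HF.Nonempty ∧ (∀ j ∈ HF, N ≤ j) ∧
      ∀ f ∈ G, ∃ v, ι P hcomm g * ∏ t ∈ HF, ι P hcomm (f t) = ι P hcomm v ∧ v ∈ E := by
  classical
  obtain ⟨x₀⟩ := hS
  set G' : Finset (ℕ → S) := G.image (fun f n => f (n + N)) with hG'
  have hG'ne : G'.Nonempty := hG.image _
  have hG'a : ∀ g ∈ G', P.AdequateSeq g := by
    intro g hg
    rcases Finset.mem_image.mp hg with ⟨f, hf, rfl⟩
    exact adequateSeq_shift P hcomm (hGa f hf) N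
  obtain ⟨m, hm, a, t, ht, hprod⟩ := hE G' hG'ne hG'a {x₀} (Finset.singleton_nonempty _)
  -- the product of the `a`s
  have huniv : (Finset.univ : Finset (Fin m)).Nonempty := ⟨⟨0, hm⟩, Finset.mem_univ _⟩
  set A : M P hcomm := ∏ i : Fin (m + 1), ι P hcomm (a i) with hA
  have hAne : A ≠ 1 := by
    rw [hA, Fin.prod_univ_castSucc]
    exact mul_ne_one_right P hcomm _ _ (jm_ne_one P hcomm _)
  set HF : Finset ℕ := Finset.image (fun i => t i + N) Finset.univ with hHF
  have hHFne : HF.Nonempty := huniv.image _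
  have hHFge : ∀ j ∈ HF, N ≤ j := by
    intro j hj
    rcases Finset.mem_image.mp hj with ⟨i, _, rfl⟩
    omega
  have key : ∀ f ∈ G, ∃ v, A * ∏ u ∈ HF, ι P hcomm (f u) = ι P hcomm v ∧ v ∈ E := by
    intro f hf
    obtain ⟨v, hv, hvE, _⟩ :=
      hprod (fun n => f (n + N)) (Finset.mem_image_of_mem _ hf)
    refine ⟨v, ?_, hvE⟩
    have h1 : ∏ u ∈ HF, ι P hcomm (f u) = ∏ i : Fin m, ι P hcomm (f (t i + N)) := by
      rw [hHF]
      exact Finset.prod_image (fun i _ j _ hij => ht.injective (by omega))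
    rw [h1, ← jProd_eq P hcomm a t (fun n => f (n + N)), hv]
    rfl
  obtain ⟨f₀, hf₀⟩ := hG
  obtain ⟨v₀, hv₀, _⟩ := key f₀ hf₀
  obtain ⟨g, hg⟩ := exists_iota_of_mul_eq_iota P hcomm A _ v₀ hAne hv₀
  refine ⟨g, HF, hHFne, hHFge, fun f hf => ?_⟩
  obtain ⟨v, hv, hvE⟩ := key f hf
  rw [← hg]
  exact ⟨v, hv, hvE⟩

end CSTAux
namespace CSTAux
open PartialSemigroup

variable {S : Type*} (P : PartialSemigroup S) (hcomm : ∀ a b : S, P.mul a b = P.mul b a)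
  (r : Ultrafilter S) (C : ℕ → Set S)

/-- The index type: finite nonempty families of adequate sequences. -/
abbrev X (P : PartialSemigroup S) := {G : Finset (ℕ → S) // G.Nonempty ∧ ∀ f ∈ G, P.AdequateSeq f}

/-- One factor of the chain product. -/
def term (prev : X P → S × Finset ℕ) (G : X P) (g : ℕ → S) : M P hcomm :=
  ι P hcomm (prev G).1 * ∏ t ∈ (prev G).2, ι P hcomm (g t)

/-- The chain product. -/
def CP (prev : X P → S × Finset ℕ) (n : ℕ) (G : Fin (n + 1) → X P)
    (f : Fin (n + 1) → ℕ → S) : M P hcomm :=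
  ∏ i, term P hcomm prev (G i) (f i)

def Chain (n : ℕ) (G : Fin (n + 1) → X P) : Prop := ∀ i j, i < j → (G i).1 ⊂ (G j).1

/-- `Cs m` is the star set of `C m`. -/
def Cs (m : ℕ) : Set S := star P r (C m)

def HypOK (prev : X P → S × Finset ℕ) (F : X P) : Prop :=
  ∀ n (G : Fin (n + 1) → X P) (f : Fin (n + 1) → ℕ → S), Chain P n G →
    (G (Fin.last n)).1 ⊂ F.1 → (∀ i, f i ∈ (G i).1) →
    ∃ v, CP P hcomm prev n G f = ι P hcomm v ∧ v ∈ Cs P r C ((G 0).1.card)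

def StepSpec (prev : X P → S × Finset ℕ) (F : X P) (p : S × Finset ℕ) : Prop :=
  p.2.Nonempty ∧
  (∀ G : X P, G.1 ⊂ F.1 → ∀ i ∈ (prev G).2, ∀ j ∈ p.2, i < j) ∧
  (∀ n (G : Fin (n + 1) → X P) (f : Fin (n + 1) → ℕ → S), Chain P n G →
    G (Fin.last n) = F → (∀ i, f i ∈ (G i).1) →
    ∃ v, (∏ i : Fin n, term P hcomm prev (G i.castSucc) (f i.castSucc)) *
        (ι P hcomm p.1 * ∏ t ∈ p.2, ι P hcomm (f (Fin.last n) t)) = ι P hcomm v ∧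
      v ∈ Cs P r C ((G 0).1.card))

lemma chain_card {n : ℕ} {G : Fin (n + 1) → X P} (hc : Chain P n G) (i : Fin (n + 1)) :
    (i : ℕ) < (G i).1.card := by
  induction i using Fin.induction with
  | zero => exact (G 0).2.1.card_pos
  | succ i ih =>
    have h2 := Finset.card_lt_card (hc i.castSucc i.succ (Fin.castSucc_lt_succ (i := i)))
    simp only [Fin.coe_castSucc] at ih
    simp only [Fin.val_succ]
    omega

lemma chain_below {n : ℕ} {G : Fin (n + 1) → X P} {F : X P} (hc : Chain P n G)
    (htop : (G (Fin.last n)).1 ⊂ F.1) (i : Fin (n + 1)) : (G i).1 ⊂ F.1 := by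
  rcases eq_or_lt_of_le (Fin.le_last i) with h | h
  · rw [h]; exact htop
  · exact (hc i (Fin.last n) h).trans htop

lemma chain_subset {n : ℕ} {G : Fin (n + 1) → X P} {F : X P} (hc : Chain P n G)
    (htop : (G (Fin.last n)).1 ⊂ F.1) (i : Fin (n + 1)) : (G i).1 ⊆ F.1 :=
  (chain_below P hc htop i).subset

lemma CP_congr (prev prev' : X P → S × Finset ℕ) (n : ℕ) (G : Fin (n + 1) → X P)
    (f : Fin (n + 1) → ℕ → S) (h : ∀ i, prev (G i) = prev' (G i)) :
    CP P hcomm prev n G f = CP P hcomm prev' n G f := by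
  unfold CP term
  exact Finset.prod_congr rfl fun i _ => by rw [h i]

lemma hypok_congr (prev prev' : X P → S × Finset ℕ) (F : X P)
    (h : ∀ G : X P, G.1 ⊂ F.1 → prev G = prev' G) (hok : HypOK P hcomm r C prev F) :
    HypOK P hcomm r C prev' F := by
  intro n G f hc htop hf
  obtain ⟨v, hv, hvC⟩ := hok n G f hc htop hf
  refine ⟨v, ?_, hvC⟩
  rw [← CP_congr P hcomm prev prev' n G f fun i => h _ (chain_below P hc htop i)]
  exact hv

lemma stepspec_congr (prev prev' : X P → S × Finset ℕ) (F : X P) (p : S × Finset ℕ)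
    (h : ∀ G : X P, G.1 ⊂ F.1 → prev G = prev' G) (hs : StepSpec P hcomm r C prev F p) :
    StepSpec P hcomm r C prev' F p := by
  obtain ⟨h1, h2, h3⟩ := hs
  refine ⟨h1, fun G hG i hi j hj => h2 G hG i (by rw [h G hG]; exact hi) j hj,
    fun n G f hc htop hf => ?_⟩
  obtain ⟨v, hv, hvC⟩ := h3 n G f hc htop hf
  refine ⟨v, ?_, hvC⟩
  rw [← hv]
  congr 1
  refine Finset.prod_congr rfl fun i _ => ?_
  have hlt : (G i.castSucc).1 ⊂ F.1 := by
    rw [← htop]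
    exact hc i.castSucc (Fin.last n) (Fin.castSucc_lt_last i)
  unfold term
  rw [h _ hlt]

end CSTAux
namespace CSTAux
open PartialSemigroup

variable {S : Type*} (P : PartialSemigroup S) (hcomm : ∀ a b : S, P.mul a b = P.mul b a)
  (r : Ultrafilter S) (C : ℕ → Set S)

lemma exists_step (hS : Nonempty S)
    (hrJ : ∀ A : Set S, A ∈ r → P.IsJSet A)
    (hidem : ∀ A : Set S, A ∈ r ↔ {a : S | P.invImg a A ∈ r} ∈ r)
    (hC : ∀ n, C n ∈ r)
    (prev : X P → S × Finset ℕ) (F : X P) (hok : HypOK P hcomm r C prev F) :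
    ∃ p, StepSpec P hcomm r C prev F p := by
  classical
  set c := F.1.card with hc
  -- The set of all values of chain products strictly below `F`, with the relevant cardinality.
  set Vals : Set (S × ℕ) := {q | ∃ (n : ℕ) (G : Fin (n + 1) → X P) (f : Fin (n + 1) → ℕ → S),
    Chain P n G ∧ (G (Fin.last n)).1 ⊂ F.1 ∧ (∀ i, f i ∈ (G i).1) ∧
    CP P hcomm prev n G f = ι P hcomm q.1 ∧ q.2 = (G 0).1.card} with hVals
  have hValsC : ∀ q ∈ Vals, q.1 ∈ Cs P r C q.2 := by
    rintro q ⟨n, G, f, hch, htop, hf, hprod, hcard⟩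
    obtain ⟨v, hv, hvC⟩ := hok n G f hch htop hf
    rw [hprod] at hv
    rw [hcard, ι_injective P hcomm hv]
    exact hvC
  -- `Vals` is finite.
  have hMn : ∀ q ∈ Vals, ∀ (n : ℕ) (G : Fin (n + 1) → X P), Chain P n G →
      (G (Fin.last n)).1 ⊂ F.1 → n < c := by
    intro q _ n G hch htop
    have h1 : (n : ℕ) < (G (Fin.last n)).1.card := by
      have := chain_card P hch (Fin.last n)
      simpa using this
    have h2 := Finset.card_lt_card htop
    omega
  have hValsFin : Vals.Finite := by
    set T := Σ n : Fin c, (Fin ((n : ℕ) + 1) → ({A // A ∈ F.1.powerset} × {g // g ∈ F.1}))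
      with hT
    have : Vals ⊆ ⋃ τ : T, {q | ∃ (G : Fin ((τ.1 : ℕ) + 1) → X P)
        (f : Fin ((τ.1 : ℕ) + 1) → ℕ → S),
        (∀ i, (G i).1 = ((τ.2 i).1 : Finset (ℕ → S))) ∧ (∀ i, f i = ((τ.2 i).2 : ℕ → S)) ∧
        CP P hcomm prev (τ.1 : ℕ) G f = ι P hcomm q.1 ∧ q.2 = (G 0).1.card} := by
      rintro q ⟨n, G, f, hch, htop, hf, hprod, hcard⟩
      have hn : n < c := hMn q ⟨n, G, f, hch, htop, hf, hprod, hcard⟩ n G hch htop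
      refine Set.mem_iUnion.mpr ⟨⟨⟨n, hn⟩, fun i =>
        (⟨(G i).1, Finset.mem_powerset.mpr (chain_subset P hch htop i)⟩,
         ⟨f i, (chain_subset P hch htop i) (hf i)⟩)⟩, ?_⟩
      exact ⟨G, f, fun i => rfl, fun i => rfl, hprod, hcard⟩
    refine Set.Finite.subset (Set.finite_iUnion fun τ => ?_) this
    apply Set.Subsingleton.finite
    rintro q ⟨G, f, hG, hf, hprod, hcard⟩ q' ⟨G', f', hG', hf', hprod', hcard'⟩
    have hGG : G = G' := funext fun i => Subtype.ext ((hG i).trans (hG' i).symm)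
    have hff : f = f' := funext fun i => (hf i).trans (hf' i).symm
    rw [hGG, hff, hprod'] at hprod
    have h1 : q.1 = q'.1 := (ι_injective P hcomm hprod).symm
    have h2 : q.2 = q'.2 := by rw [hcard, hcard', hGG]
    exact Prod.ext h1 h2
  -- The member of `r` to which we apply the J-set property.
  set D : Set S := Cs P r C c ∩ ⋂ q ∈ Vals, P.invImg q.1 (Cs P r C q.2) with hD
  have hDr : D ∈ r := by
    refine Filter.inter_mem (star_mem P r hidem (hC c)) ?_
    rw [Filter.biInter_mem hValsFin]
    intro q hq
    exact star_invImg P r hidem (hC q.2) (hValsC q hq)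
  have hDJ : P.IsJSet D := hrJ D hDr
  -- the lower bound on new indices
  set B : ℕ := F.1.powerset.sup (fun A =>
    (if h : A.Nonempty ∧ ∀ f ∈ A, P.AdequateSeq f then (prev ⟨A, h⟩).2 else ∅).sup id) with hB
  obtain ⟨g, HF, hHFne, hHFge, hkey⟩ :=
    jset_apply P hcomm hS hDJ F.1 F.2.1 F.2.2 (B + 1)
  refine ⟨(g, HF), hHFne, ?_, ?_⟩
  · -- ordering
    intro G hG i hi j hj
    have h1 : i ≤ B := by
      have h2 := Finset.le_sup (s := F.1.powerset)
        (f := fun A : Finset (ℕ → S) =>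
          (if h : A.Nonempty ∧ ∀ f ∈ A, P.AdequateSeq f then (prev ⟨A, h⟩).2 else ∅).sup id)
        (Finset.mem_powerset.mpr hG.subset)
      rw [dif_pos G.2] at h2
      exact le_trans (Finset.le_sup (f := id) hi) h2
    have h3 := hHFge j hj
    omega
  · -- chains ending at F
    intro n G f hch htop hf
    have hfl : f (Fin.last n) ∈ F.1 := by rw [← htop]; exact hf (Fin.last n)
    obtain ⟨v, hv, hvD⟩ := hkey (f (Fin.last n)) hfl
    cases n with
    | zero =>
      refine ⟨v, ?_, ?_⟩
      · simpa using hv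
      · have : (G 0).1.card = c := by
          rw [hc, ← htop]
          rfl
        rw [this]
        exact hvD.1
    | succ m =>
      set G' : Fin (m + 1) → X P := fun i => G i.castSucc with hG'
      set f' : Fin (m + 1) → ℕ → S := fun i => f i.castSucc with hf'
      have hch' : Chain P m G' := fun i j hij =>
        hch i.castSucc j.castSucc (by simpa using hij)
      have htop' : (G' (Fin.last m)).1 ⊂ F.1 := by
        rw [← htop]
        exact hch (Fin.last m).castSucc (Fin.last (m + 1)) (Fin.castSucc_lt_last _)
      have hfm : ∀ i, f' i ∈ (G' i).1 := fun i => hf i.castSucc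
      obtain ⟨d, hd, hdC⟩ := hok m G' f' hch' htop' hfm
      have hqV : ((d, (G' 0).1.card) : S × ℕ) ∈ Vals :=
        ⟨m, G', f', hch', htop', hfm, hd, rfl⟩
      have hvd : v ∈ P.invImg d (Cs P r C (G' 0).1.card) := by
        have := hvD.2
        rw [Set.mem_iInter₂] at this
        exact this _ hqV
      obtain ⟨w, hw, hwC⟩ := hvd
      refine ⟨w, ?_, ?_⟩
      · have h1 : (∏ i : Fin (m + 1), term P hcomm prev (G i.castSucc) (f i.castSucc))
            = CP P hcomm prev m G' f' := rfl
        rw [h1, hd, hv]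
        show jm P hcomm (some d) * jm P hcomm (some v) = _
        rw [jm_mul, op_some_some, hw]
        rfl
      · have h0 : G' 0 = G 0 := rfl
        rw [← h0]
        exact hwC

end CSTAux
namespace CSTAux
open PartialSemigroup

variable {S : Type*} (P : PartialSemigroup S) (hcomm : ∀ a b : S, P.mul a b = P.mul b a)
  (r : Ultrafilter S) (C : ℕ → Set S)

lemma exists_good (hS : Nonempty S)
    (hrJ : ∀ A : Set S, A ∈ r → P.IsJSet A)
    (hidem : ∀ A : Set S, A ∈ r ↔ {a : S | P.invImg a A ∈ r} ∈ r)
    (hC : ∀ n, C n ∈ r) :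
    ∃ Ψ : X P → S × Finset ℕ, ∀ F, StepSpec P hcomm r C Ψ F (Ψ F) := by
  classical
  haveI : Nonempty (S × Finset ℕ) := ⟨(hS.some, ∅)⟩
  have wf : WellFounded (fun G F : X P => G.1 ⊂ F.1) := by
    have h1 : WellFounded (InvImage (· < ·) fun G : X P => G.1.card) :=
      InvImage.wf _ Nat.lt_wfRel.wf
    exact Subrelation.wf (fun h => Finset.card_lt_card h) h1
  have aux : ∀ (F : X P) (prev : X P → S × Finset ℕ),
      ∃ p, HypOK P hcomm r C prev F → StepSpec P hcomm r C prev F p := by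
    intro F prev
    by_cases h : HypOK P hcomm r C prev F
    · exact (exists_step P hcomm r C hS hrJ hidem hC prev F h).imp fun p hp _ => hp
    · exact ⟨Classical.arbitrary _, fun h' => absurd h' h⟩
  set Ψ : X P → S × Finset ℕ := wf.fix (fun F rec =>
    Classical.choose (aux F (fun G => if h : G.1 ⊂ F.1 then rec G h else Classical.arbitrary _)))
    with hΨ
  have hfix : ∀ F : X P, Ψ F = Classical.choose
      (aux F (fun G => if h : G.1 ⊂ F.1 then Ψ G else Classical.arbitrary _)) := by
    intro F
    rw [hΨ]
    rw [WellFounded.fix_eq]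
  refine ⟨Ψ, ?_⟩
  intro F
  induction F using WellFounded.induction wf with
  | _ F IH =>
    set prevF : X P → S × Finset ℕ :=
      fun G => if h : G.1 ⊂ F.1 then Ψ G else Classical.arbitrary _ with hprevF
    have hagree : ∀ G : X P, G.1 ⊂ F.1 → prevF G = Ψ G := fun G h => dif_pos h
    have hok : HypOK P hcomm r C Ψ F := by
      intro n G f hch htop hf
      obtain ⟨v, hv, hvC⟩ := (IH (G (Fin.last n)) htop).2.2 n G f hch rfl hf
      refine ⟨v, ?_, hvC⟩
      rw [CP, Fin.prod_univ_castSucc]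
      exact hv
    have hok' : HypOK P hcomm r C prevF F :=
      hypok_congr P hcomm r C Ψ prevF F (fun G h => (hagree G h).symm) hok
    have hspec : StepSpec P hcomm r C prevF F (Ψ F) := by
      rw [hfix F]
      exact Classical.choose_spec (aux F prevF) hok'
    exact stepspec_congr P hcomm r C prevF Ψ F (Ψ F) hagree hspec

end CSTAux
open CSTAux

open PartialSemigroup in
/-- Phulara-type central sets theorem for commutative adequate partial semigroups. -/
theorem stmt13 {S : Type*} (P : PartialSemigroup S) (hP : P.Adequate)
    (hcomm : ∀ a b : S, P.mul a b = P.mul b a)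
    -- `r` is an idempotent in `J(S) ⊆ δS`:
    (r : Ultrafilter S) (hrδ : P.mem_delta r)
    (hrJ : ∀ A : Set S, A ∈ r → P.IsJSet A)
    (hidem : ∀ A : Set S, A ∈ r ↔ {a : S | P.invImg a A ∈ r} ∈ r)
    (C : ℕ → Set S) (hC : ∀ n, C n ∈ r) :
    ∃ γ : {G : Finset (ℕ → S) // G.Nonempty ∧ ∀ f ∈ G, P.AdequateSeq f} → S,
    ∃ H : {G : Finset (ℕ → S) // G.Nonempty ∧ ∀ f ∈ G, P.AdequateSeq f} → Finset ℕ,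
      (∀ G, (H G).Nonempty) ∧
      -- (1): if G ⊊ F then max H(G) < min H(F)
      (∀ F G, G.1 ⊂ F.1 → ∀ i ∈ H G, ∀ j ∈ H F, i < j) ∧
      -- (2): products along increasing chains with |G₁| = m land in C m
      (∀ (n : ℕ) (G : Fin (n + 1) → {G : Finset (ℕ → S) // G.Nonempty ∧
            ∀ f ∈ G, P.AdequateSeq f})
          (f : Fin (n + 1) → ℕ → S),
        (∀ i j : Fin (n + 1), i < j → (G i).1 ⊂ (G j).1) →
        (∀ i, f i ∈ (G i).1) →
        ∃ v, P.optProd ((List.finRange (n + 1)).map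
              (fun i => (P.finProd (f i) (H (G i))).bind
                (fun w => P.mul (γ (G i)) w))) = some v ∧
          v ∈ C ((G 0).1.card)) := by
  have hS : Nonempty S := Filter.nonempty_of_neBot (r : Filter S)
  obtain ⟨Ψ, hΨ⟩ := exists_good P hcomm r C hS hrJ hidem hC
  refine ⟨fun G => (Ψ G).1, fun G => (Ψ G).2, fun G => (hΨ G).1,
    fun F G hGF i hi j hj => (hΨ F).2.1 G hGF i hi j hj, ?_⟩
  intro n G f hch hf
  obtain ⟨v, hv, hvC⟩ := (hΨ (G (Fin.last n))).2.2 n G f hch rfl hf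
  have hCP : CP P hcomm Ψ n G f = ι P hcomm v := by
    rw [CP, Fin.prod_univ_castSucc]
    exact hv
  have hlist : ((List.finRange (n + 1)).map
      (fun i => (P.finProd (f i) ((Ψ (G i)).2)).bind (fun w => P.mul ((Ψ (G i)).1) w))) ≠ [] := by
    simp [List.finRange]
  have hopt : jm P hcomm (P.optProd ((List.finRange (n + 1)).map
      (fun i => (P.finProd (f i) ((Ψ (G i)).2)).bind (fun w => P.mul ((Ψ (G i)).1) w))))
      = CP P hcomm Ψ n G f := by
    rw [optProd_eq P hcomm _ hlist, List.map_map, CP, Fin.prod_univ_def]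
    congr 1
    apply List.map_congr_left
    intro i _
    show jm P hcomm ((P.finProd (f i) ((Ψ (G i)).2)).bind (fun w => P.mul ((Ψ (G i)).1) w))
      = term P hcomm Ψ (G i) (f i)
    have h1 : (P.finProd (f i) ((Ψ (G i)).2)).bind (fun w => P.mul ((Ψ (G i)).1) w)
        = op P (some ((Ψ (G i)).1)) (P.finProd (f i) ((Ψ (G i)).2)) := by
      cases P.finProd (f i) ((Ψ (G i)).2) <;> rfl
    rw [h1, term, ← jm_mul, ← finProd_eq P hcomm _ _ (hΨ (G i)).1]
    rfl
  rw [hCP] at hopt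
  refine ⟨v, jm_injective P hcomm hopt, ?_⟩
  exact star_subset P r _ hvC
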